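/- For every ρ with real part greater than 1/2, λ > 0, v > 0, and integer m ≤ 0, the contour integral along the vertical line Re(t) = v of e^{2πmt}/(t² + λ²)^ρ dt vanishes. -/

import Mathlib

open Complex MeasureTheory Filter Set intervalIntegral

namespace VLIV



noncomputable def f (ρ : ℂ) (lam : ℝ) (m : ℤ) (t : ℂ) : ℂ :=
  Complex.exp (2 * Real.pi * m * t) * (t ^ 2 + (lam : ℝ) ^ 2) ^ (-ρ)

lemma slit {lam : ℝ} (hlam : 0 < lam) {t : ℂ} (ht : 0 < t.re) :
    t ^ 2 + (lam : ℂ) ^ 2 ∈ Complex.slitPlane := by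
  rw [Complex.mem_slitPlane_iff]
  rcases eq_or_ne t.im 0 with h | h
  · left
    simp only [pow_two, Complex.add_re, Complex.mul_re, Complex.ofReal_re, Complex.ofReal_im, h]
    nlinarith
  · right
    simp only [pow_two, Complex.add_im, Complex.mul_im, Complex.ofReal_re, Complex.ofReal_im]
    intro hc
    rcases mul_self_eq_zero.mp (by nlinarith : (t.re * t.im) * (t.re * t.im) = 0) with h'
    exact absurd h' (mul_ne_zero ht.ne' h)

lemma diff (ρ : ℂ) {lam : ℝ} (m : ℤ) (hlam : 0 < lam) {t : ℂ} (ht : 0 < t.re) :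
    DifferentiableAt ℂ (f ρ lam m) t := by
  apply DifferentiableAt.mul
  · exact (Complex.differentiable_exp.comp
      ((differentiable_const _).mul differentiable_id)).differentiableAt
  · exact DifferentiableAt.cpow ((differentiableAt_pow 2).add_const _)
      (differentiableAt_const _) (slit hlam ht)




lemma norm_le (ρ : ℂ) (lam : ℝ) {m : ℤ} (hm : m ≤ 0) {t : ℂ} (ht : 0 ≤ t.re) :
    ‖f ρ lam m t‖ ≤
      Real.exp (Real.pi * |ρ.im|) * ‖t ^ 2 + (lam : ℝ) ^ 2‖ ^ (-ρ.re) := by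
  rw [f, norm_mul]
  have h1 : ‖Complex.exp (2 * Real.pi * m * t)‖ ≤ 1 := by
    have : (2 * (Real.pi : ℂ) * (m : ℂ) * t) = ((2 * Real.pi * m : ℝ) : ℂ) * t := by
      push_cast; ring
    rw [Complex.norm_exp, this, Complex.re_ofReal_mul]
    have hmr : (m : ℝ) ≤ 0 := by exact_mod_cast hm
    have : 2 * Real.pi * m * t.re ≤ 0 := by
      have h := mul_nonneg (mul_nonneg (by positivity : (0:ℝ) ≤ 2 * Real.pi)
        (neg_nonneg.mpr hmr)) ht
      nlinarith
    calc Real.exp (2 * Real.pi * m * t.re) ≤ Real.exp 0 := Real.exp_le_exp.mpr this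
      _ = 1 := Real.exp_zero
  have h2 : ‖(t ^ 2 + ((lam : ℝ) : ℂ) ^ 2) ^ (-ρ)‖ ≤
      ‖t ^ 2 + (lam : ℝ) ^ 2‖ ^ (-ρ.re) * Real.exp (Real.pi * |ρ.im|) := by
    set z := t ^ 2 + ((lam : ℝ) : ℂ) ^ 2 with hz
    have hle := Complex.norm_cpow_le z (-ρ)
    have hb : |z.arg * (-ρ).im| ≤ Real.pi * |ρ.im| := by
      rw [abs_mul, Complex.neg_im, abs_neg]
      exact mul_le_mul_of_nonneg_right (Complex.abs_arg_le_pi z) (abs_nonneg _)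
    refine hle.trans ?_
    rw [Complex.neg_re, div_eq_mul_inv]
    refine mul_le_mul_of_nonneg_left ?_ (Real.rpow_nonneg (norm_nonneg _) _)
    rw [← Real.exp_neg]
    exact Real.exp_le_exp.mpr (by linarith [(abs_le.mp hb).1])
  calc ‖Complex.exp (2 * Real.pi * m * t)‖ * ‖(t ^ 2 + ((lam:ℝ):ℂ) ^ 2) ^ (-ρ)‖
      ≤ 1 * (‖t ^ 2 + (lam : ℝ) ^ 2‖ ^ (-ρ.re) * Real.exp (Real.pi * |ρ.im|)) :=
        mul_le_mul h1 h2 (norm_nonneg _) zero_le_one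
    _ = Real.exp (Real.pi * |ρ.im|) * ‖t ^ 2 + (lam : ℝ) ^ 2‖ ^ (-ρ.re) := by ring

lemma abs_lower {lam : ℝ} (hlam : 0 < lam) {t : ℂ} (ht : 0 < t.re) :
    max t.re (|t.im| - lam) ^ 2 ≤ ‖t ^ 2 + (lam : ℝ) ^ 2‖ := by
  have hfac : t ^ 2 + ((lam : ℝ) : ℂ) ^ 2 = (t - lam * I) * (t + lam * I) := by
    linear_combination (lam:ℂ)^2 * Complex.I_sq
  rw [hfac, norm_mul]
  have hM0 : (0 : ℝ) ≤ max t.re (|t.im| - lam) := le_trans ht.le (le_max_left _ _)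
  have h1 : max t.re (|t.im| - lam) ≤ ‖t - lam * I‖ := by
    apply max_le
    · calc t.re = (t - lam * I).re := by simp
        _ ≤ |(t - lam * I).re| := le_abs_self _
        _ ≤ ‖t - lam * I‖ := Complex.abs_re_le_norm _
    · have him : (t - lam * I).im = t.im - lam := by simp
      calc |t.im| - lam = |t.im| - |lam| := by rw [abs_of_pos hlam]
        _ ≤ |t.im - lam| := abs_sub_abs_le_abs_sub _ _
        _ = |(t - lam * I).im| := by rw [him]
        _ ≤ ‖t - lam * I‖ := Complex.abs_im_le_norm _
  have h2 : max t.re (|t.im| - lam) ≤ ‖t + lam * I‖ := by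
    apply max_le
    · calc t.re = (t + lam * I).re := by simp
        _ ≤ |(t + lam * I).re| := le_abs_self _
        _ ≤ ‖t + lam * I‖ := Complex.abs_re_le_norm _
    · have him : (t + lam * I).im = t.im + lam := by simp
      calc |t.im| - lam = |t.im| - |(-lam)| := by rw [abs_neg, abs_of_pos hlam]
        _ ≤ |t.im - (-lam)| := abs_sub_abs_le_abs_sub _ _
        _ = |(t + lam * I).im| := by rw [him]; ring_nf
        _ ≤ ‖t + lam * I‖ := Complex.abs_im_le_norm _
  calc max t.re (|t.im| - lam) ^ 2 = max t.re (|t.im| - lam) * max t.re (|t.im| - lam) := sq _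
    _ ≤ ‖t - lam * I‖ * ‖t + lam * I‖ :=
        mul_le_mul h1 h2 hM0 (norm_nonneg _)




-- assumed from earlier parts:

/-- bound by a power of max, valid for any positive lower bound `b` of the max. -/
lemma norm_le_max (ρ : ℂ) {lam : ℝ} {m : ℤ} (hρ : 1 / 2 < ρ.re) (hm : m ≤ 0)
    (hlam : 0 < lam) {t : ℂ} (ht : 0 < t.re) {b : ℝ} (hb : 0 < b)
    (hbM : b ≤ max t.re (|t.im| - lam)) :
    ‖f ρ lam m t‖ ≤ Real.exp (Real.pi * |ρ.im|) * b ^ (-(2 * ρ.re)) := by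
  set M := max t.re (|t.im| - lam) with hM
  have hM0 : 0 < M := lt_of_lt_of_le hb hbM
  have h1 : ‖t ^ 2 + (lam : ℝ) ^ 2‖ ^ (-ρ.re) ≤ (M ^ 2) ^ (-ρ.re) :=
    Real.rpow_le_rpow_of_nonpos (by positivity) (abs_lower hlam ht) (by linarith)
  have h2 : (M ^ 2 : ℝ) ^ (-ρ.re) = M ^ (-(2 * ρ.re)) := by
    rw [← Real.rpow_natCast M 2, ← Real.rpow_mul hM0.le]
    norm_num
  have h3 : (M ^ 2 : ℝ) ^ (-ρ.re) ≤ b ^ (-(2 * ρ.re)) := by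
    rw [h2]
    exact Real.rpow_le_rpow_of_nonpos hb hbM (by linarith)
  calc ‖f ρ lam m t‖ ≤ Real.exp (Real.pi * |ρ.im|) *
        ‖t ^ 2 + (lam : ℝ) ^ 2‖ ^ (-ρ.re) := norm_le ρ lam hm ht.le
    _ ≤ Real.exp (Real.pi * |ρ.im|) * b ^ (-(2 * ρ.re)) := by
        refine mul_le_mul_of_nonneg_left ?_ (Real.exp_nonneg _)
        exact h1.trans h3

/-- uniform dominating bound on the half-plane `Re t ≥ v`. -/
lemma bound (ρ : ℂ) {lam v : ℝ} {m : ℤ} (hρ : 1 / 2 < ρ.re) (hm : m ≤ 0)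
    (hlam : 0 < lam) (hv : 0 < v) {x y : ℝ} (hx : v ≤ x) :
    ‖f ρ lam m ((x : ℂ) + y * I)‖ ≤
      Real.exp (Real.pi * |ρ.im|) * (1 + (1 + lam) / v) ^ (2 * ρ.re) *
        (1 + |y|) ^ (-(2 * ρ.re)) := by
  set t : ℂ := (x : ℂ) + y * I with ht'
  have htre : t.re = x := by simp [ht']
  have htim : t.im = y := by simp [ht']
  have htpos : 0 < t.re := by rw [htre]; linarith
  set K : ℝ := 1 + (1 + lam) / v with hK
  have hK1 : 1 ≤ K := by
    rw [hK]; have : 0 < (1 + lam) / v := by positivity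
    linarith
  have hKpos : 0 < K := lt_of_lt_of_le one_pos hK1
  set M := max t.re (|t.im| - lam) with hM
  have hMv : v ≤ M := by
    rw [hM, htre]
    exact le_trans hx (le_max_left _ _)
  have hMpos : 0 < M := lt_of_lt_of_le hv hMv
  have hKM : 1 + |y| ≤ K * M := by
    have h1 : |t.im| - lam ≤ M := le_max_right _ _
    have h2 : (1 + lam) ≤ ((1 + lam) / v) * M := by
      rw [div_mul_eq_mul_div, le_div_iff₀ hv]
      have : 0 ≤ 1 + lam := by linarith
      nlinarith
    rw [hK, add_mul, one_mul]
    rw [htim] at h1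
    linarith
  have hbM : (1 + |y|) / K ≤ M := by
    rw [div_le_iff₀ hKpos]
    calc 1 + |y| ≤ K * M := hKM
      _ = M * K := mul_comm _ _
  have hb : 0 < (1 + |y|) / K := by positivity
  have key := norm_le_max ρ hρ hm hlam htpos hb hbM
  refine key.trans (le_of_eq ?_)
  rw [Real.div_rpow (by positivity) hKpos.le, Real.rpow_neg hKpos.le (2 * ρ.re)]
  rw [div_inv_eq_mul]
  ring

/-- the dominating function is integrable. -/
lemma g_int (ρ : ℂ) (lam v : ℝ) (hρ : 1 / 2 < ρ.re) :
    Integrable (fun y : ℝ => Real.exp (Real.pi * |ρ.im|) * (1 + (1 + lam) / v) ^ (2 * ρ.re) *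
      (1 + |y|) ^ (-(2 * ρ.re))) := by
  have h : Integrable (fun y : ℝ => (1 + ‖y‖) ^ (-(2 * ρ.re))) :=
    integrable_one_add_norm (by simp; linarith)
  have h' : Integrable (fun y : ℝ => (1 + |y|) ^ (-(2 * ρ.re))) := by
    simpa [Real.norm_eq_abs] using h
  exact h'.const_mul _





section
variable {ρ : ℂ} {lam v : ℝ} {m : ℤ}

lemma contLine (ρ : ℂ) (m : ℤ) (hlam : 0 < lam) {x : ℝ} (hx : 0 < x) :
    Continuous fun y : ℝ => f ρ lam m ((x : ℂ) + y * I) := by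
  rw [continuous_iff_continuousAt]
  intro y
  have hline : Continuous fun y : ℝ => (x : ℂ) + y * I := by continuity
  have ht : (0:ℝ) < ((x : ℂ) + (y:ℝ) * I).re := by simp [hx]
  have h1 : ContinuousAt (f ρ lam m) ((x : ℂ) + (y : ℝ) * I) := (diff ρ m hlam ht).continuousAt
  exact ContinuousAt.comp (g := f ρ lam m) h1 hline.continuousAt

lemma intLine (hρ : 1 / 2 < ρ.re) (hm : m ≤ 0) (hlam : 0 < lam) (hv : 0 < v)
    {x : ℝ} (hx : v ≤ x) :
    Integrable fun y : ℝ => f ρ lam m ((x : ℂ) + y * I) := by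
  refine (g_int ρ lam v hρ).mono'
    ((contLine ρ m hlam (lt_of_lt_of_le hv hx)).aestronglyMeasurable) ?_
  exact ae_of_all _ fun y => bound ρ hρ hm hlam hv hx

lemma F_eq (hρ : 1 / 2 < ρ.re) (hm : m ≤ 0) (hlam : 0 < lam) (hv : 0 < v)
    {W : ℝ} (hW : v ≤ W) :
    (∫ y : ℝ, f ρ lam m ((W : ℂ) + y * I)) = ∫ y : ℝ, f ρ lam m ((v : ℂ) + y * I) := by
  set C := Real.exp (Real.pi * |ρ.im|) with hC
  -- rectangle identity for each T
  have hrect : ∀ T : ℝ, (∫ x in v..W, f ρ lam m ((x : ℂ) + (-T) * I))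
      - (∫ x in v..W, f ρ lam m ((x : ℂ) + T * I))
      + I • (∫ y in (-T)..T, f ρ lam m ((W : ℂ) + y * I))
      - I • (∫ y in (-T)..T, f ρ lam m ((v : ℂ) + y * I)) = 0 := by
    intro T
    have := Complex.integral_boundary_rect_eq_zero_of_differentiableOn (f ρ lam m)
      ⟨v, -T⟩ ⟨W, T⟩ ?_
    · simpa using this
    · intro t ht
      rw [Complex.mem_reProdIm] at ht
      have : v ≤ t.re ∨ W ≤ t.re := by
        rcases mem_uIcc.mp ht.1 with h | h
        · exact Or.inl h.1
        · exact Or.inr h.1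
      have htre : 0 < t.re := by rcases this with h | h <;> linarith
      exact (diff ρ m hlam htre).differentiableWithinAt
  -- horizontal edges tend to 0
  have hhor : ∀ s : ℝ → ℝ, (∀ T, |s T| = |T|) →
      Tendsto (fun T : ℝ => ∫ x in v..W, f ρ lam m ((x : ℂ) + (s T) * I)) atTop (nhds 0) := by
    intro s hs
    apply squeeze_zero_norm' (a := fun T => C * (T - lam) ^ (-(2 * ρ.re)) * |W - v|)
    · filter_upwards [eventually_ge_atTop (lam + 1)] with T hT
      have hT0 : 0 < T - lam := by linarith
      refine intervalIntegral.norm_integral_le_of_norm_le_const ?_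
      intro x hx
      have hx' : v ≤ x ∧ x ≤ W := by
        rw [uIoc_of_le hW] at hx
        exact ⟨hx.1.le, hx.2⟩
      have htre : (0:ℝ) < ((x : ℂ) + (s T : ℝ) * I).re := by simp; linarith
      refine norm_le_max ρ hρ hm hlam htre hT0 ?_
      have him : |((x : ℂ) + (s T : ℝ) * I).im| = |T| := by
        simp [hs T]
      rw [him]
      refine le_trans ?_ (le_max_right _ _)
      have : T ≤ |T| := le_abs_self T
      linarith
    · have h1 : Tendsto (fun T : ℝ => T - lam) atTop atTop :=
        tendsto_atTop_add_const_right atTop (-lam) tendsto_id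
      have h2 : Tendsto (fun T : ℝ => (T - lam) ^ (-(2 * ρ.re))) atTop (nhds 0) :=
        (tendsto_rpow_neg_atTop (by linarith)).comp h1
      have := (h2.const_mul C).mul_const |W - v|
      simpa using this
  -- vertical edges tend to the full integrals
  have hver : ∀ x : ℝ, v ≤ x →
      Tendsto (fun T : ℝ => ∫ y in (-T)..T, f ρ lam m ((x : ℂ) + y * I)) atTop
        (nhds (∫ y : ℝ, f ρ lam m ((x : ℂ) + y * I))) := by
    intro x hx
    exact intervalIntegral_tendsto_integral (intLine hρ hm hlam hv hx)
      tendsto_neg_atTop_atBot tendsto_id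
  have hlim : Tendsto (fun T : ℝ =>
      (∫ x in v..W, f ρ lam m ((x : ℂ) + (-T) * I))
      - (∫ x in v..W, f ρ lam m ((x : ℂ) + T * I))
      + I • (∫ y in (-T)..T, f ρ lam m ((W : ℂ) + y * I))
      - I • (∫ y in (-T)..T, f ρ lam m ((v : ℂ) + y * I))) atTop
      (nhds (0 - 0 + I • (∫ y : ℝ, f ρ lam m ((W : ℂ) + y * I))
        - I • (∫ y : ℝ, f ρ lam m ((v : ℂ) + y * I)))) := by
    refine Tendsto.sub (Tendsto.add (Tendsto.sub ?_ ?_) ?_) ?_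
    · have := hhor (fun T => -T) (fun T => abs_neg T)
      simpa using this
    · exact hhor (fun T => T) (fun T => rfl)
    · exact (hver W hW).const_smul I
    · exact (hver v le_rfl).const_smul I
  have h0 : (0:ℂ) - 0 + I • (∫ y : ℝ, f ρ lam m ((W : ℂ) + y * I))
      - I • (∫ y : ℝ, f ρ lam m ((v : ℂ) + y * I)) = 0 := by
    have : Tendsto (fun _ : ℝ => (0:ℂ)) atTop (nhds (0 - 0 + I • (∫ y : ℝ, f ρ lam m ((W : ℂ) + y * I))
        - I • (∫ y : ℝ, f ρ lam m ((v : ℂ) + y * I)))) := by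
      refine hlim.congr fun T => (hrect T)
    exact tendsto_nhds_unique this tendsto_const_nhds
  -- From 0 - 0 + I•A - I•B = 0 conclude A = B
  have hI : I • ((∫ y : ℝ, f ρ lam m ((W : ℂ) + y * I)) - ∫ y : ℝ, f ρ lam m ((v : ℂ) + y * I)) = 0 := by
    rw [smul_sub]
    linear_combination h0
  have := smul_eq_zero.mp hI
  rcases this with h | h
  · exact absurd h I_ne_zero
  · exact sub_eq_zero.mp h





lemma F_tendsto_zero {ρ : ℂ} {lam v : ℝ} {m : ℤ} (hρ : 1 / 2 < ρ.re) (hm : m ≤ 0)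
    (hlam : 0 < lam) (hv : 0 < v) :
    Tendsto (fun W : ℝ => ∫ y : ℝ, f ρ lam m ((W : ℂ) + y * I)) atTop (nhds 0) := by
  have h0 : (0 : ℂ) = ∫ _ : ℝ, (0 : ℂ) := by simp
  rw [h0]
  apply MeasureTheory.tendsto_integral_filter_of_dominated_convergence
    (fun y : ℝ => Real.exp (Real.pi * |ρ.im|) * (1 + (1 + lam) / v) ^ (2 * ρ.re) *
      (1 + |y|) ^ (-(2 * ρ.re)))
  · filter_upwards [eventually_ge_atTop v] with W hW
    exact (contLine ρ m hlam (lt_of_lt_of_le hv hW)).aestronglyMeasurable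
  · filter_upwards [eventually_ge_atTop v] with W hW
    exact ae_of_all _ fun y => bound ρ hρ hm hlam hv hW
  · exact g_int ρ lam v hρ
  · refine ae_of_all _ fun y => ?_
    apply squeeze_zero_norm' (a := fun W : ℝ => Real.exp (Real.pi * |ρ.im|) * W ^ (-(2 * ρ.re)))
    · filter_upwards [eventually_gt_atTop (0:ℝ)] with W hW
      have htre : (0:ℝ) < ((W : ℂ) + (y:ℝ) * I).re := by simpa using hW
      refine norm_le_max ρ hρ hm hlam htre hW ?_
      refine le_trans ?_ (le_max_left _ _)
      simp
    · have h2 : Tendsto (fun W : ℝ => W ^ (-(2 * ρ.re))) atTop (nhds 0) :=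
        tendsto_rpow_neg_atTop (by linarith)
      simpa using h2.const_mul (Real.exp (Real.pi * |ρ.im|))

lemma F_zero {ρ : ℂ} {lam v : ℝ} {m : ℤ} (hρ : 1 / 2 < ρ.re) (hm : m ≤ 0)
    (hlam : 0 < lam) (hv : 0 < v) :
    (∫ y : ℝ, f ρ lam m ((v : ℂ) + y * I)) = 0 := by
  have h1 : Tendsto (fun W : ℝ => ∫ y : ℝ, f ρ lam m ((W : ℂ) + y * I)) atTop
      (nhds (∫ y : ℝ, f ρ lam m ((v : ℂ) + y * I))) := by
    refine Tendsto.congr' ?_ (tendsto_const_nhds)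
    filter_upwards [eventually_ge_atTop v] with W hW
    exact (F_eq hρ hm hlam hv hW).symm
  exact tendsto_nhds_unique h1 (F_tendsto_zero hρ hm hlam hv)


end
end VLIV

open VLIV in
/-- For Re ρ > 1/2, λ > 0, v > 0 and m ≤ 0, the integral of e^{2πmt}(t²+λ²)^{−ρ}
along the vertical line t = v + iy, y ∈ ℝ, vanishes. -/
theorem vertical_line_integral_vanishes (ρ : ℂ) (hρ : 1 / 2 < ρ.re)
    (lam v : ℝ) (hlam : 0 < lam) (hv : 0 < v) (m : ℤ) (hm : m ≤ 0) :
    ∫ y : ℝ, Complex.exp (2 * Real.pi * m * ((v : ℂ) + I * y)) *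
        (((v : ℂ) + I * y) ^ 2 + (lam : ℂ) ^ 2) ^ (-ρ) = 0 := by
  have := F_zero (ρ := ρ) (lam := lam) (v := v) (m := m) hρ hm hlam hv
  rw [← this]
  congr 1
  funext y
  rw [VLIV.f, mul_comm I (y : ℂ)]
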